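/- Let A : E → C(ℝ^d, ℂ) be a continuous linear map that commutes with all twisted shifts, i.e. (A(τ_s g))(t) = exp((i/2)θ(s,t))·(A g)(t−s) for all s, t ∈ ℝ^d and g ∈ E. Then there exists a unique continuous linear functional v ∈ E′ such that A g = v ⊛_θ g, i.e. (A g)(s) = v(τ_s ǧ), for all g ∈ E and s ∈ ℝ^d; the functional is given by v(g) = (A ǧ)(0). (Proposition 2.) -/

import Mathlib

/-!
STATEMENT 4 (Proposition 2).
If `A : E → C(ℝ^d, ℂ)` is a continuous linear map commuting with all twisted
shifts, i.e. `(A(τ_s g))(t) = exp((i/2)θ(s,t)) · (A g)(t − s)`, then there is a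
unique `v ∈ E′` with `A g = v ⊛_θ g`, i.e. `(A g)(s) = v (τ_s ǧ)` for all `g`
and `s`; moreover `v g = (A ǧ)(0)`.
-/

theorem exists_unique_functional_of_commuting_map
    (d : ℕ) (hd : 1 ≤ d)
    {E : Type*} [AddCommGroup E] [Module ℝ E] [Module ℂ E] [IsScalarTower ℝ ℂ E]
    [TopologicalSpace E] [IsTopologicalAddGroup E] [ContinuousSMul ℂ E]
    [LocallyConvexSpace ℝ E]
    -- the bilinear skew-symmetric form θ on ℝ^d
    (θ : (Fin d → ℝ) →ₗ[ℝ] (Fin d → ℝ) →ₗ[ℝ] ℝ)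
    (hθ : ∀ s t : Fin d → ℝ, θ s t = - θ t s)
    -- E is regarded as a space of complex-valued functions on ℝ^d via ι
    (ι : E →ₗ[ℂ] ((Fin d → ℝ) → ℂ)) (hι : Function.Injective ι)
    -- the twisted shift operators τ_s and τ̄_s
    (τ τ' : (Fin d → ℝ) → E →L[ℂ] E)
    (hτ : ∀ (s : Fin d → ℝ) (g : E) (t : Fin d → ℝ),
      ι (τ s g) t = Complex.exp (Complex.I / 2 * ((θ s t : ℝ) : ℂ)) * ι g (t - s))
    (R : E →L[ℂ] E) (hR : ∀ (g : E) (t : Fin d → ℝ), ι (R g) t = ι g (-t))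
    (A : E →ₗ[ℂ] C((Fin d → ℝ), ℂ)) (hA : Continuous A)
    (hAτ : ∀ (s : Fin d → ℝ) (g : E) (t : Fin d → ℝ),
      A (τ s g) t = Complex.exp (Complex.I / 2 * ((θ s t : ℝ) : ℂ)) * A g (t - s)) :
    ∃ v : E →L[ℂ] ℂ,
      (∀ (g : E) (s : Fin d → ℝ), A g s = v (τ s (R g))) ∧
      (∀ g : E, v g = A (R g) 0) ∧
      ∀ w : E →L[ℂ] ℂ, (∀ (g : E) (s : Fin d → ℝ), A g s = w (τ s (R g))) → w = v := by
  -- v g := A (R g) 0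
  set v : E →L[ℂ] ℂ :=
    { toFun := fun g => A (R g) 0
      map_add' := by intro a b; simp
      map_smul' := by intro c a; simp
      cont := by
        exact (continuous_eval_const (0 : Fin d → ℝ)).comp
          (hA.comp R.continuous) } with hv
  have hvapp : ∀ g : E, v g = A (R g) 0 := fun g => rfl
  -- R (R g) = g
  have hRR : ∀ g : E, R (R g) = g := by
    intro g
    apply hι
    funext t
    rw [hR, hR, neg_neg]
  -- R (τ s (R g)) = τ (-s) g
  have hkey : ∀ (s : Fin d → ℝ) (g : E), R (τ s (R g)) = τ (-s) g := by
    intro s g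
    apply hι
    funext t
    rw [hR, hτ, hR, hτ]
    have h1 : (θ s (-t) : ℝ) = (θ (-s) t : ℝ) := by
      simp [map_neg]
    rw [h1]
    ring_nf
  refine ⟨v, ?_, hvapp, ?_⟩
  · intro g s
    rw [hvapp, hkey, hAτ]
    simp
  · intro w hw
    have hτ0 : ∀ x : E, τ 0 x = x := by
      intro x
      apply hι
      funext t
      rw [hτ]
      simp
    ext g
    calc w g = w (τ 0 (R (R g))) := by rw [hτ0, hRR]
      _ = A (R g) 0 := (hw (R g) 0).symm
      _ = v g := rfl
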